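/- Let n ≥ 2 and k ≤ n be natural numbers, let f : ℕ → Finset (Fin n) satisfy (f t).card ≤ k for every t : ℕ, and let ρ be a real number with ρ > k·(k−1)/(n·(n−1)). Then for every real C there exist t : ℕ and stations w, z : Fin n with w ≠ z such that ρ·t − |{r ∈ Finset.range t | w ∈ f r ∧ z ∈ f r}| ≥ C. (This is the quantitative content of the theorem that no k-energy-oblivious algorithm routing directly is stable against adversaries with injection rate greater than k(k−1)/(n(n−1)): the adversary injects at least ρ·t packets into w all destined for z, and a direct-routing algorithm can deliver such a packet only in a round in which both w and z are switched on, at most one per round, so w's queue exceeds C.) -/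

import Mathlib

/-- No `k`-energy-oblivious direct-routing algorithm is stable against adversaries of
injection rate `ρ > k(k−1)/(n(n−1))`. -/
theorem oblivious_direct_unstable (n k : ℕ) (hn : 2 ≤ n) (hk : k ≤ n)
    (f : ℕ → Finset (Fin n)) (hf : ∀ t : ℕ, (f t).card ≤ k)
    (ρ : ℝ)
    (hρ : ρ > (k : ℝ) * ((k : ℝ) - 1) / ((n : ℝ) * ((n : ℝ) - 1))) :
    ∀ C : ℝ, ∃ (t : ℕ) (w z : Fin n), w ≠ z ∧
      ρ * t - ((Finset.range t).filter (fun r => w ∈ f r ∧ z ∈ f r)).card ≥ C := by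
  intro C
  set q : ℝ := (k : ℝ) * ((k : ℝ) - 1) / ((n : ℝ) * ((n : ℝ) - 1)) with hq
  have hε : 0 < ρ - q := sub_pos.mpr hρ
  obtain ⟨t, ht⟩ := exists_nat_ge (C / (ρ - q))
  have hCt : C ≤ (t : ℝ) * (ρ - q) := by
    rw [div_le_iff₀ hε] at ht; linarith
  have hn2 : (2 : ℝ) ≤ (n : ℝ) := by exact_mod_cast hn
  have hnpos : (0 : ℝ) < (n : ℝ) * ((n : ℝ) - 1) := by nlinarith
  set S := (Finset.univ : Finset (Fin n)).offDiag with hS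
  -- sum over pairs equals sum over rounds of offDiag cards
  have key : ∑ p ∈ S, ((Finset.range t).filter (fun r => p.1 ∈ f r ∧ p.2 ∈ f r)).card
      = ∑ r ∈ Finset.range t, ((f r).offDiag).card := by
    simp only [Finset.card_filter]
    rw [Finset.sum_comm]
    refine Finset.sum_congr rfl fun r _ => ?_
    rw [← Finset.card_filter]
    congr 1
    ext p
    simp only [Finset.mem_filter, Finset.mem_offDiag, Finset.mem_univ, true_and, hS]
    tauto
  have hb : ∀ r, ((f r).offDiag).card ≤ k * k - k := by
    intro r
    rw [Finset.offDiag_card]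
    have h1 := hf r
    have h2 : (f r).card * (f r).card ≤ k * k := Nat.mul_le_mul h1 h1
    have h3 : (f r).card * (f r).card - (f r).card
        = (f r).card * ((f r).card - 1) := by
      cases Nat.eq_zero_or_pos (f r).card with
      | inl h => simp [h]
      | inr h => rw [Nat.mul_sub, Nat.mul_one]
    have h4 : k * k - k = k * (k - 1) := by
      cases Nat.eq_zero_or_pos k with
      | inl h => simp [h]
      | inr h => rw [Nat.mul_sub, Nat.mul_one]
    rw [h3, h4]
    exact Nat.mul_le_mul h1 (Nat.sub_le_sub_right h1 1)
  have hsum : (∑ p ∈ S, (((Finset.range t).filter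
      (fun r => p.1 ∈ f r ∧ p.2 ∈ f r)).card : ℝ)) ≤ ∑ _p ∈ S, (t : ℝ) * q := by
    have hSn : (S.card : ℝ) = (n : ℝ) * ((n : ℝ) - 1) := by
      rw [hS, Finset.offDiag_card, Finset.card_univ, Fintype.card_fin]
      have hle : n ≤ n * n := Nat.le_mul_of_pos_left n (by omega)
      push_cast [Nat.cast_sub hle]
      ring
    have h1 : (∑ p ∈ S, (((Finset.range t).filter
        (fun r => p.1 ∈ f r ∧ p.2 ∈ f r)).card : ℝ))
        ≤ (t : ℝ) * ((k : ℝ) * ((k : ℝ) - 1)) := by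
      rw [← Nat.cast_sum, key]
      have h2 : (∑ r ∈ Finset.range t, ((f r).offDiag).card : ℕ) ≤ t * (k * k - k) :=
        (Finset.sum_le_sum fun r _ => hb r).trans (by simp [Finset.sum_const])
      calc ((∑ r ∈ Finset.range t, ((f r).offDiag).card : ℕ) : ℝ)
          ≤ ((t * (k * k - k) : ℕ) : ℝ) := by exact_mod_cast h2
        _ ≤ (t : ℝ) * ((k : ℝ) * ((k : ℝ) - 1)) := by
            cases Nat.eq_zero_or_pos k with
            | inl h => simp [h]
            | inr h =>
              have hle : k ≤ k * k := Nat.le_mul_of_pos_left k h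
              exact le_of_eq (by push_cast [Nat.cast_sub hle]; ring)
    rw [Finset.sum_const, nsmul_eq_mul, hSn]
    have heq : ((n : ℝ) * ((n : ℝ) - 1)) * ((t : ℝ) * q)
        = (t : ℝ) * ((k : ℝ) * ((k : ℝ) - 1)) := by
      have hn1 : (n : ℝ) - 1 ≠ 0 := by linarith
      rw [hq]; field_simp
    linarith
  have hSne : S.Nonempty := by
    refine ⟨(⟨0, by omega⟩, ⟨1, by omega⟩), ?_⟩
    simp [hS, Finset.mem_offDiag, Fin.ext_iff]
  obtain ⟨p, hpS, hple⟩ := Finset.exists_le_of_sum_le hSne hsum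
  refine ⟨t, p.1, p.2, ?_, ?_⟩
  · exact (Finset.mem_offDiag.mp hpS).2.2
  · have : ρ * t - ((Finset.range t).filter (fun r => p.1 ∈ f r ∧ p.2 ∈ f r)).card
        ≥ ρ * t - (t : ℝ) * q := by linarith
    calc ρ * (t : ℝ) - _ ≥ ρ * t - (t : ℝ) * q := this
      _ = (t : ℝ) * (ρ - q) := by ring
      _ ≥ C := hCt
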